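/- Let f : ℝ×ℝ×ℝ → ℝ be C², L-periodic in x, with f(x, ·, t) compactly supported in v uniformly for (x, t) in compact sets, satisfying the Vlasov equation ∂_t f + v·∂_x f + E(x,t)·∂_v f = 0, where E is C³, L-periodic in x, satisfies ∂_x E(x,t) = ρ(x,t) − 1 with ρ(x,t) = ∫_ℝ f(x,v,t) dv, and ∫₀^L E(x,t) dx = 0 for all t. Define J(x,t) = ∫_ℝ v·f(x,v,t) dv and M₂(x,t) = ∫_ℝ v²·f(x,v,t) dv. If (x(t), v(t)) solves the characteristic system x'(t) = v(t), v'(t) = E(x(t), t), then for all t in the interval of existence: (d²/dt²) E(x(t), t) = v(t)²·∂_x ρ(x(t),t) + ∂_x M₂(x(t),t) − 2·v(t)·∂_x J(x(t),t) − E(x(t),t). -/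

import Mathlib

open MeasureTheory



section VlasovPoissonAux
open MeasureTheory Set

/-- Derivative of an affine path in `ℝ × ℝ × ℝ` (middle coordinate fixed). -/
lemma VP.path3 (A B a b v s : ℝ) :
    HasDerivAt (fun s : ℝ => ((A + a * s, v, B + b * s) : ℝ × ℝ × ℝ)) (a, 0, b) s := by
  have h1 : HasDerivAt (fun s : ℝ => A + a * s) a s := by
    simpa using ((hasDerivAt_id s).const_mul a).const_add A
  have h2 : HasDerivAt (fun _ : ℝ => v) 0 s := hasDerivAt_const s v
  have h3 : HasDerivAt (fun s : ℝ => B + b * s) b s := by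
    simpa using ((hasDerivAt_id s).const_mul b).const_add B
  exact h1.prodMk (h2.prodMk h3)

/-- Derivative of an affine path in `ℝ × ℝ`. -/
lemma VP.path2 (A B a b s : ℝ) :
    HasDerivAt (fun s : ℝ => ((A + a * s, B + b * s) : ℝ × ℝ)) (a, b) s := by
  have h1 : HasDerivAt (fun s : ℝ => A + a * s) a s := by
    simpa using ((hasDerivAt_id s).const_mul a).const_add A
  have h3 : HasDerivAt (fun s : ℝ => B + b * s) b s := by
    simpa using ((hasDerivAt_id s).const_mul b).const_add B
  exact h1.prodMk h3

lemma VP.hasDerivAt_comp3 {f : ℝ × ℝ × ℝ → ℝ} (hf : Differentiable ℝ f)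
    (A B a b v s : ℝ) :
    HasDerivAt (fun s : ℝ => f (A + a * s, v, B + b * s))
      (fderiv ℝ f (A + a * s, v, B + b * s) (a, 0, b)) s :=
  (hf _).hasFDerivAt.comp_hasDerivAt s (VP.path3 A B a b v s)

lemma VP.hasDerivAt_comp2 {g : ℝ × ℝ → ℝ} (hg : Differentiable ℝ g)
    (A B a b s : ℝ) :
    HasDerivAt (fun s : ℝ => g (A + a * s, B + b * s))
      (fderiv ℝ g (A + a * s, B + b * s) (a, b)) s :=
  (hg _).hasFDerivAt.comp_hasDerivAt s (VP.path2 A B a b s)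

/-- partial in `x` as `HasDerivAt` -/
lemma VP.hasDerivAt_x {f : ℝ × ℝ × ℝ → ℝ} (hf : Differentiable ℝ f) (x v t : ℝ) :
    HasDerivAt (fun y : ℝ => f (y, v, t)) (fderiv ℝ f (x, v, t) (1, 0, 0)) x := by
  simpa using VP.hasDerivAt_comp3 hf 0 t 1 0 v x

lemma VP.hasDerivAt_v {f : ℝ × ℝ × ℝ → ℝ} (hf : Differentiable ℝ f) (x v t : ℝ) :
    HasDerivAt (fun w : ℝ => f (x, w, t)) (fderiv ℝ f (x, v, t) (0, 1, 0)) v := by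
  have h1 : HasDerivAt (fun w : ℝ => x) 0 v := hasDerivAt_const v x
  have h2 : HasDerivAt (fun w : ℝ => w) 1 v := hasDerivAt_id v
  have h3 : HasDerivAt (fun w : ℝ => t) 0 v := hasDerivAt_const v t
  exact (hf _).hasFDerivAt.comp_hasDerivAt v (h1.prodMk (h2.prodMk h3))

lemma VP.hasDerivAt_t {f : ℝ × ℝ × ℝ → ℝ} (hf : Differentiable ℝ f) (x v t : ℝ) :
    HasDerivAt (fun s : ℝ => f (x, v, s)) (fderiv ℝ f (x, v, t) (0, 0, 1)) t := by
  simpa using VP.hasDerivAt_comp3 hf x 0 0 1 v t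

lemma VP.hasDerivAt_x2 {g : ℝ × ℝ → ℝ} (hg : Differentiable ℝ g) (x t : ℝ) :
    HasDerivAt (fun y : ℝ => g (y, t)) (fderiv ℝ g (x, t) (1, 0)) x := by
  simpa using VP.hasDerivAt_comp2 hg 0 t 1 0 x

lemma VP.hasDerivAt_t2 {g : ℝ × ℝ → ℝ} (hg : Differentiable ℝ g) (x t : ℝ) :
    HasDerivAt (fun s : ℝ => g (x, s)) (fderiv ℝ g (x, t) (0, 1)) t := by
  simpa using VP.hasDerivAt_comp2 hg x 0 0 1 t

/-- linear expansion of `fderiv` in `ℝ×ℝ` -/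
lemma VP.fd2_expand {g : ℝ × ℝ → ℝ} (p : ℝ × ℝ) (c d : ℝ) :
    fderiv ℝ g p (c, d) = c * fderiv ℝ g p (1, 0) + d * fderiv ℝ g p (0, 1) := by
  have : ((c, d) : ℝ × ℝ) = c • ((1 : ℝ), (0 : ℝ)) + d • ((0 : ℝ), (1 : ℝ)) := by
    simp [Prod.ext_iff]
  rw [this, map_add, (fderiv ℝ g p).map_smul, (fderiv ℝ g p).map_smul, smul_eq_mul, smul_eq_mul]

/-- smoothness of directional derivative -/
lemma VP.contDiff_fderiv_apply3 {f : ℝ × ℝ × ℝ → ℝ} (hf : ContDiff ℝ 2 f) (u : ℝ × ℝ × ℝ) :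
    ContDiff ℝ 1 fun p => fderiv ℝ f p u :=
  (ContinuousLinearMap.apply ℝ ℝ u).contDiff.comp (hf.fderiv_right (le_refl _))

lemma VP.contDiff_fderiv_apply2 {g : ℝ × ℝ → ℝ} (hg : ContDiff ℝ 3 g) (u : ℝ × ℝ) :
    ContDiff ℝ 2 fun p => fderiv ℝ g p u :=
  (ContinuousLinearMap.apply ℝ ℝ u).contDiff.comp (hg.fderiv_right (by norm_num))

/-- mixed partials commute for a `C²` function on `ℝ × ℝ` -/
lemma VP.mixed_symm {g : ℝ × ℝ → ℝ} (hg : ContDiff ℝ 2 g) (p : ℝ × ℝ) (u w : ℝ × ℝ) :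
    fderiv ℝ (fun q => fderiv ℝ g q u) p w = fderiv ℝ (fun q => fderiv ℝ g q w) p u := by
  have hdiff : Differentiable ℝ (fderiv ℝ g) :=
    (hg.fderiv_right (m := 1) (le_refl _)).differentiable (by norm_num)
  have hcomp : ∀ z : ℝ × ℝ, fderiv ℝ (fun q => fderiv ℝ g q z) p
      = (ContinuousLinearMap.apply ℝ ℝ z).comp (fderiv ℝ (fderiv ℝ g) p) := by
    intro z
    exact (((ContinuousLinearMap.apply ℝ ℝ z).hasFDerivAt).comp p
      (hdiff p).hasFDerivAt).fderiv
  have hsymm := second_derivative_symmetric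
    (fun y => (hg.differentiable (by norm_num) y).hasFDerivAt) (hdiff p).hasFDerivAt u w
  rw [hcomp u, hcomp w]
  simpa using hsymm.symm

/-- Vanishing of `f` and its derivative for large `|v|`, uniformly along an affine path. -/
lemma VP.vanish_path {f : ℝ × ℝ × ℝ → ℝ}
    (hsupp : ∀ K : Set (ℝ × ℝ), IsCompact K → ∃ R : ℝ, ∀ x t : ℝ, (x, t) ∈ K →
      ∀ v : ℝ, R ≤ |v| → f (x, v, t) = 0)
    (A B a b s₀ : ℝ) :
    ∃ R : ℝ, 0 < R ∧ ∀ s ∈ Metric.ball s₀ 1, ∀ v : ℝ, R ≤ |v| →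
      f (A + a * s, v, B + b * s) = 0 ∧ fderiv ℝ f (A + a * s, v, B + b * s) = 0 := by
  set r : ℝ := |a| + |b| + 1 with hr
  obtain ⟨R₀, hR₀⟩ := hsupp (Metric.closedBall (A + a * s₀, B + b * s₀) r)
    (isCompact_closedBall _ _)
  refine ⟨max R₀ 0 + 1, by positivity, ?_⟩
  intro s hs v hv
  have hsd : |s - s₀| < 1 := by simpa [Real.dist_eq] using hs
  have hdist : ∀ s' ∈ Metric.ball s₀ 1,
      ((A + a * s', B + b * s') : ℝ × ℝ) ∈ Metric.ball ((A + a * s₀, B + b * s₀) : ℝ × ℝ) r := by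
    intro s' hs'
    have hsd' : |s' - s₀| < 1 := by simpa [Real.dist_eq] using hs'
    have h1 : dist (A + a * s') (A + a * s₀) = |a| * |s' - s₀| := by
      rw [Real.dist_eq, ← abs_mul]; ring_nf
    have h2 : dist (B + b * s') (B + b * s₀) = |b| * |s' - s₀| := by
      rw [Real.dist_eq, ← abs_mul]; ring_nf
    have ha := abs_nonneg a
    have hb := abs_nonneg b
    have hsd0 := abs_nonneg (s' - s₀)
    rw [Metric.mem_ball, Prod.dist_eq, h1, h2]
    have : |a| * |s' - s₀| ≤ |a| := by nlinarith
    have : |b| * |s' - s₀| ≤ |b| := by nlinarith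
    simp only [sup_lt_iff]
    constructor <;> nlinarith
  have hmem : ∀ s' ∈ Metric.ball s₀ 1, ∀ v' : ℝ, R₀ ≤ |v'| →
      f (A + a * s', v', B + b * s') = 0 := by
    intro s' hs' v' hv'
    exact hR₀ _ _ (Metric.ball_subset_closedBall (hdist s' hs')) v' hv'
  have hf0 : f (A + a * s, v, B + b * s) = 0 :=
    hmem s hs v (by have h := le_max_left R₀ 0; have : max R₀ 0 + 1 ≤ |v| := hv; linarith)
  refine ⟨hf0, ?_⟩
  -- the function vanishes on an open neighborhood, so the derivative vanishes
  set N : Set (ℝ × ℝ × ℝ) :=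
    {p | (p.1, p.2.2) ∈ Metric.ball ((A + a * s₀, B + b * s₀) : ℝ × ℝ) r ∧ max R₀ 0 < |p.2.1|}
  have hNopen : IsOpen N := by
    have h1 : Continuous fun p : ℝ × ℝ × ℝ => ((p.1, p.2.2) : ℝ × ℝ) :=
      continuous_fst.prodMk (continuous_snd.comp continuous_snd)
    have h2 : Continuous fun p : ℝ × ℝ × ℝ => |p.2.1| :=
      continuous_abs.comp (continuous_fst.comp continuous_snd)
    exact (Metric.isOpen_ball.preimage h1).inter (isOpen_lt continuous_const h2)
  have hmemN : (A + a * s, v, B + b * s) ∈ N := by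
    constructor
    · exact hdist s hs
    · simp only []
      have : max R₀ 0 + 1 ≤ |v| := hv
      linarith
  have hev : f =ᶠ[nhds (A + a * s, v, B + b * s)] (fun _ => 0) := by
    filter_upwards [hNopen.mem_nhds hmemN] with p hp
    have : R₀ ≤ |p.2.1| := le_trans (le_max_left _ _) (le_of_lt hp.2)
    have := hR₀ p.1 p.2.2 (Metric.ball_subset_closedBall hp.1) p.2.1 this
    simpa using this
  rw [hev.fderiv_eq]
  exact fderiv_const_apply 0

lemma VP.abs_ge_of_not_mem_Icc {R v : ℝ} (h : v ∉ Set.Icc (-R) R) : R ≤ |v| := by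
  rw [Set.mem_Icc, not_and_or] at h
  rcases h with h | h
  · exact le_abs.2 (Or.inr (by linarith [not_le.1 h]))
  · exact le_abs.2 (Or.inl (le_of_lt (not_le.1 h)))

lemma VP.abs_ge_of_not_mem_Ioc {R v : ℝ} (hR : 0 < R) (h : v ∉ Set.Ioc (-R) R) : R ≤ |v| := by
  rw [Set.mem_Ioc, not_and_or] at h
  rcases h with h | h
  · exact le_abs.2 (Or.inr (by linarith [not_lt.1 h]))
  · exact le_abs.2 (Or.inl (le_of_not_ge h))

/-- integrability of a continuous function vanishing for large `|v|` -/
lemma VP.integrable_of_vanish {g : ℝ → ℝ} (hg : Continuous g) {R : ℝ}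
    (h : ∀ v : ℝ, R ≤ |v| → g v = 0) : Integrable g := by
  apply hg.integrable_of_hasCompactSupport
  apply HasCompactSupport.intro (isCompact_Icc (a := -R) (b := R))
  intro v hv
  exact h v (VP.abs_ge_of_not_mem_Icc hv)

/-- the whole-line integral equals the interval integral when the function vanishes
for `R ≤ |v|` -/
lemma VP.integral_eq_intervalIntegral {g : ℝ → ℝ} {R : ℝ} (hR : 0 < R)
    (h : ∀ v : ℝ, R ≤ |v| → g v = 0) :
    ∫ v : ℝ, g v = ∫ v in (-R)..R, g v := by
  rw [intervalIntegral.integral_eq_integral_of_support_subset]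
  intro v hv
  simp only [Function.mem_support] at hv
  by_contra hmem
  exact hv (h v (VP.abs_ge_of_not_mem_Ioc hR hmem))

/-- Differentiation under the integral sign for moments of `f`, along affine paths
in the `(x, t)` variables. -/
lemma VP.key_param {f : ℝ × ℝ × ℝ → ℝ} (hf : ContDiff ℝ 2 f)
    (hsupp : ∀ K : Set (ℝ × ℝ), IsCompact K → ∃ R : ℝ, ∀ x t : ℝ, (x, t) ∈ K →
      ∀ v : ℝ, R ≤ |v| → f (x, v, t) = 0)
    (w : ℝ → ℝ) (hw : Continuous w) (A B a b s₀ : ℝ) :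
    HasDerivAt (fun s => ∫ v : ℝ, w v * f (A + a * s, v, B + b * s))
      (∫ v : ℝ, w v * fderiv ℝ f (A + a * s₀, v, B + b * s₀) (a, 0, b)) s₀ := by
  obtain ⟨R, hR, hvan⟩ := VP.vanish_path hsupp A B a b s₀
  have hfd : Differentiable ℝ f := hf.differentiable (by norm_num)
  have hfc : Continuous f := hf.continuous
  have hfdc : Continuous (fderiv ℝ f) :=
    ((hf.fderiv_right (m := 1) (by norm_num)).continuous)
  set F : ℝ → ℝ → ℝ := fun s v => w v * f (A + a * s, v, B + b * s) with hF
  set F' : ℝ → ℝ → ℝ := fun s v => w v * fderiv ℝ f (A + a * s, v, B + b * s) (a, 0, b) with hF'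
  have hqc : ∀ s : ℝ, Continuous fun v : ℝ => ((A + a * s, v, B + b * s) : ℝ × ℝ × ℝ) := by
    intro s; exact continuous_const.prodMk (continuous_id.prodMk continuous_const)
  have hFc : ∀ s, Continuous (F s) := fun s => hw.mul (hfc.comp (hqc s))
  have hF'c : ∀ s, Continuous (F' s) := fun s =>
    hw.mul ((hfdc.comp (hqc s)).clm_apply continuous_const)
  have hΦ : Continuous fun sv : ℝ × ℝ =>
      w sv.2 * fderiv ℝ f (A + a * sv.1, sv.2, B + b * sv.1) (a, 0, b) := by
    exact (hw.comp continuous_snd).mul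
      ((hfdc.comp ((continuous_const.add (continuous_const.mul continuous_fst)).prodMk
        (continuous_snd.prodMk (continuous_const.add (continuous_const.mul continuous_fst))))).clm_apply
        continuous_const)
  obtain ⟨C, hC⟩ := (((isCompact_closedBall s₀ 1).prod (isCompact_Icc (a := -R) (b := R)))).exists_bound_of_continuousOn hΦ.continuousOn
  have hC0 : 0 ≤ C := by
    have hm : ((s₀, 0) : ℝ × ℝ) ∈ Metric.closedBall s₀ 1 ×ˢ Set.Icc (-R) R := by
      refine ⟨Metric.mem_closedBall_self zero_le_one, ?_⟩
      simp only [Set.mem_Icc]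
      constructor <;> linarith
    exact le_trans (norm_nonneg _) (hC (s₀, 0) hm)
  set bound : ℝ → ℝ := Set.indicator (Set.Icc (-R) R) (fun _ => C) with hb
  have key := hasDerivAt_integral_of_dominated_loc_of_deriv_le (μ := volume)
    (F := F) (F' := F') (x₀ := s₀) (bound := bound) (s := Metric.ball s₀ 1) (Metric.ball_mem_nhds s₀ zero_lt_one)
    (Filter.Eventually.of_forall fun s => (hFc s).aestronglyMeasurable)
    (VP.integrable_of_vanish (hFc s₀) (R := R) (fun v hv =>
      by simp only [hF]; rw [(hvan s₀ (Metric.mem_ball_self zero_lt_one) v hv).1, mul_zero]))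
    ((hF'c s₀).aestronglyMeasurable)
    (Filter.Eventually.of_forall ?_) ?_ (Filter.Eventually.of_forall ?_)
  · exact key.2
  · -- bound
    intro v s hs
    by_cases hvR : v ∈ Set.Icc (-R) R
    · have hmem : (s, v) ∈ Metric.closedBall s₀ 1 ×ˢ Set.Icc (-R) R :=
        ⟨Metric.ball_subset_closedBall hs, hvR⟩
      have := hC (s, v) hmem
      simpa [hF', hb, abs_mul, Set.indicator_of_mem hvR] using this
    · have hvabs : R ≤ |v| := VP.abs_ge_of_not_mem_Icc hvR
      have h0 := (hvan s hs v hvabs).2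
      simp [hF', hb, Set.indicator_of_notMem hvR, h0]
  · -- bound integrable
    rw [hb, integrable_indicator_iff measurableSet_Icc]
    exact integrableOn_const measure_Icc_lt_top.ne
  · -- differentiability
    intro v s hs
    exact (VP.hasDerivAt_comp3 hfd A B a b v s).const_mul (w v)

/-- vanishing at a single point, for `f` and its derivative -/
lemma VP.vanish_pt {f : ℝ × ℝ × ℝ → ℝ}
    (hsupp : ∀ K : Set (ℝ × ℝ), IsCompact K → ∃ R : ℝ, ∀ x t : ℝ, (x, t) ∈ K →
      ∀ v : ℝ, R ≤ |v| → f (x, v, t) = 0)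
    (x t : ℝ) :
    ∃ R : ℝ, 0 < R ∧ ∀ v : ℝ, R ≤ |v| →
      f (x, v, t) = 0 ∧ fderiv ℝ f (x, v, t) = 0 := by
  obtain ⟨R, hR, h⟩ := VP.vanish_path hsupp x t 0 0 0
  exact ⟨R, hR, fun v hv => by
    simpa using h 0 (Metric.mem_ball_self zero_lt_one) v hv⟩

/-- ∫ ∂ᵥ f dv = 0 -/
lemma VP.integral_dv {f : ℝ × ℝ × ℝ → ℝ} (hf : ContDiff ℝ 2 f)
    (hsupp : ∀ K : Set (ℝ × ℝ), IsCompact K → ∃ R : ℝ, ∀ x t : ℝ, (x, t) ∈ K →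
      ∀ v : ℝ, R ≤ |v| → f (x, v, t) = 0)
    (x t : ℝ) :
    ∫ v : ℝ, fderiv ℝ f (x, v, t) (0, 1, 0) = 0 := by
  obtain ⟨R, hR, hvan⟩ := VP.vanish_pt hsupp x t
  have hfd : Differentiable ℝ f := hf.differentiable (by norm_num)
  have hcont : Continuous fun v : ℝ => fderiv ℝ f (x, v, t) (0, 1, 0) :=
    (((hf.fderiv_right (m := 1) (by norm_num)).continuous).comp
      (continuous_const.prodMk (continuous_id.prodMk continuous_const))).clm_apply
      continuous_const
  rw [VP.integral_eq_intervalIntegral hR (fun v hv => by rw [(hvan v hv).2]; simp)]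
  rw [intervalIntegral.integral_eq_sub_of_hasDerivAt
    (f := fun v => f (x, v, t)) (fun v _ => VP.hasDerivAt_v hfd x v t)
    (hcont.intervalIntegrable _ _)]
  rw [(hvan R (by rw [abs_of_pos hR])).1, (hvan (-R) (by rw [abs_neg, abs_of_pos hR])).1, sub_zero]

/-- ∫ v ∂ᵥ f dv = - ∫ f dv -/
lemma VP.integral_v_dv {f : ℝ × ℝ × ℝ → ℝ} (hf : ContDiff ℝ 2 f)
    (hsupp : ∀ K : Set (ℝ × ℝ), IsCompact K → ∃ R : ℝ, ∀ x t : ℝ, (x, t) ∈ K →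
      ∀ v : ℝ, R ≤ |v| → f (x, v, t) = 0)
    (x t : ℝ) :
    ∫ v : ℝ, v * fderiv ℝ f (x, v, t) (0, 1, 0) = -∫ v : ℝ, f (x, v, t) := by
  obtain ⟨R, hR, hvan⟩ := VP.vanish_pt hsupp x t
  have hfd : Differentiable ℝ f := hf.differentiable (by norm_num)
  have hcont1 : Continuous fun v : ℝ => fderiv ℝ f (x, v, t) (0, 1, 0) :=
    (((hf.fderiv_right (m := 1) (by norm_num)).continuous).comp
      (continuous_const.prodMk (continuous_id.prodMk continuous_const))).clm_apply
      continuous_const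
  have hcont0 : Continuous fun v : ℝ => f (x, v, t) :=
    hf.continuous.comp (continuous_const.prodMk (continuous_id.prodMk continuous_const))
  have hderiv : ∀ v : ℝ, HasDerivAt (fun v => v * f (x, v, t))
      (f (x, v, t) + v * fderiv ℝ f (x, v, t) (0, 1, 0)) v := by
    intro v
    have := (hasDerivAt_id v).mul (VP.hasDerivAt_v hfd x v t)
    simpa [add_comm, Pi.mul_def] using this
  have hFTC := intervalIntegral.integral_eq_sub_of_hasDerivAt
    (a := -R) (b := R) (fun v _ => hderiv v)
    ((hcont0.add ((continuous_id).mul hcont1)).intervalIntegrable _ _)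
  rw [(hvan R (by rw [abs_of_pos hR])).1, (hvan (-R) (by rw [abs_neg, abs_of_pos hR])).1] at hFTC
  simp only [mul_zero, sub_zero] at hFTC
  have hsplit : ∫ v in (-R)..R, (f (x, v, t) + v * fderiv ℝ f (x, v, t) (0, 1, 0))
      = (∫ v in (-R)..R, f (x, v, t)) + ∫ v in (-R)..R, v * fderiv ℝ f (x, v, t) (0, 1, 0) :=
    intervalIntegral.integral_add (hcont0.intervalIntegrable _ _)
      ((continuous_id.mul hcont1).intervalIntegrable _ _)
  rw [hsplit] at hFTC
  rw [VP.integral_eq_intervalIntegral hR (fun v hv => by rw [(hvan v hv).2]; simp),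
    VP.integral_eq_intervalIntegral (g := fun v => f (x, v, t)) hR
      (fun v hv => (hvan v hv).1)]
  linarith

/-- differentiation under the interval integral, in the second variable -/
lemma VP.ikey {G : ℝ × ℝ → ℝ} (hG : ContDiff ℝ 1 G) (L s₀ : ℝ) :
    HasDerivAt (fun s => ∫ x in (0:ℝ)..L, G (x, s))
      (∫ x in (0:ℝ)..L, fderiv ℝ G (x, s₀) (0, 1)) s₀ := by
  have hGd : Differentiable ℝ G := hG.differentiable (by norm_num)
  have hGc : Continuous G := hG.continuous
  have hfdc : Continuous fun p : ℝ × ℝ => fderiv ℝ G p (0, 1) := by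
    exact ((hG.fderiv_right (m := 0) (by norm_num)).continuous).clm_apply continuous_const
  have hΦ : Continuous fun xs : ℝ × ℝ => fderiv ℝ G (xs.1, xs.2) (0, 1) := by
    exact hfdc.comp (continuous_fst.prodMk continuous_snd)
  obtain ⟨C, hC⟩ := ((isCompact_uIcc (a := (0:ℝ)) (b := L)).prod
    (isCompact_closedBall s₀ 1)).exists_bound_of_continuousOn hΦ.continuousOn
  have key := intervalIntegral.hasDerivAt_integral_of_dominated_loc_of_deriv_le
    (F := fun s x => G (x, s)) (F' := fun s x => fderiv ℝ G (x, s) (0, 1))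
    (x₀ := s₀) (a := 0) (b := L) (μ := volume) (bound := fun _ => C) (s := Metric.ball s₀ 1) (Metric.ball_mem_nhds s₀ zero_lt_one)
    (Filter.Eventually.of_forall fun s =>
      ((hGc.comp (continuous_id.prodMk continuous_const)).aestronglyMeasurable).restrict)
    ((hGc.comp (continuous_id.prodMk continuous_const)).intervalIntegrable _ _)
    ((hfdc.comp (continuous_id.prodMk continuous_const)).aestronglyMeasurable).restrict
    (Filter.Eventually.of_forall ?_) (intervalIntegrable_const)
    (Filter.Eventually.of_forall ?_)
  · exact key.2
  · intro x hx s hs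
    exact hC (x, s) ⟨uIoc_subset_uIcc hx, Metric.ball_subset_closedBall hs⟩
  · intro x _ s _
    simpa using VP.hasDerivAt_comp2 hGd x 0 0 1 s

namespace VP

variable {f : ℝ × ℝ × ℝ → ℝ} {E : ℝ × ℝ → ℝ}

section
variable (hf : ContDiff ℝ 2 f)
  (hsupp : ∀ K : Set (ℝ × ℝ), IsCompact K → ∃ R : ℝ, ∀ x t : ℝ, (x, t) ∈ K →
      ∀ v : ℝ, R ≤ |v| → f (x, v, t) = 0)
include hf


/-- continuity in `v` of a directional derivative of `f` -/
lemma contv (u : ℝ × ℝ × ℝ) (x t : ℝ) :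
    Continuous fun v : ℝ => fderiv ℝ f (x, v, t) u :=
  (((hf.fderiv_right (m := 1) (by norm_num)).continuous).comp
    (continuous_const.prodMk (continuous_id.prodMk continuous_const))).clm_apply
    continuous_const

lemma contv0 (x t : ℝ) : Continuous fun v : ℝ => f (x, v, t) :=
  hf.continuous.comp (continuous_const.prodMk (continuous_id.prodMk continuous_const))

include hsupp

lemma rho_x (x t : ℝ) :
    HasDerivAt (fun y => ∫ v : ℝ, f (y, v, t))
      (∫ v : ℝ, fderiv ℝ f (x, v, t) (1, 0, 0)) x := by
  simpa using VP.key_param hf hsupp (fun _ => 1) continuous_const 0 t 1 0 x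

lemma rho_t (x t : ℝ) :
    HasDerivAt (fun s => ∫ v : ℝ, f (x, v, s))
      (∫ v : ℝ, fderiv ℝ f (x, v, t) (0, 0, 1)) t := by
  simpa using VP.key_param hf hsupp (fun _ => 1) continuous_const x 0 0 1 t

lemma J_x (x t : ℝ) :
    HasDerivAt (fun y => ∫ v : ℝ, v * f (y, v, t))
      (∫ v : ℝ, v * fderiv ℝ f (x, v, t) (1, 0, 0)) x := by
  simpa using VP.key_param hf hsupp (fun v => v) continuous_id 0 t 1 0 x

lemma J_t (x t : ℝ) :
    HasDerivAt (fun s => ∫ v : ℝ, v * f (x, v, s))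
      (∫ v : ℝ, v * fderiv ℝ f (x, v, t) (0, 0, 1)) t := by
  simpa using VP.key_param hf hsupp (fun v => v) continuous_id x 0 0 1 t

lemma M2_x (x t : ℝ) :
    HasDerivAt (fun y => ∫ v : ℝ, v ^ 2 * f (y, v, t))
      (∫ v : ℝ, v ^ 2 * fderiv ℝ f (x, v, t) (1, 0, 0)) x := by
  simpa using VP.key_param hf hsupp (fun v => v ^ 2) (continuous_pow 2) 0 t 1 0 x

omit hsupp in
/-- the Vlasov equation in `fderiv` form -/
lemma vlasov_fd
    (hVlasov : ∀ x v t : ℝ,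
      deriv (fun s => f (x, v, s)) t + v * deriv (fun y => f (y, v, t)) x +
        E (x, t) * deriv (fun w => f (x, w, t)) v = 0)
    (x v t : ℝ) :
    fderiv ℝ f (x, v, t) (0, 0, 1)
      = -(v * fderiv ℝ f (x, v, t) (1, 0, 0)) - E (x, t) * fderiv ℝ f (x, v, t) (0, 1, 0) := by
  have hfd : Differentiable ℝ f := hf.differentiable (by norm_num)
  have h := hVlasov x v t
  rw [(VP.hasDerivAt_t hfd x v t).deriv, (VP.hasDerivAt_x hfd x v t).deriv,
    (VP.hasDerivAt_v hfd x v t).deriv] at h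
  linarith

/-- continuity equation: `∂ₜ ρ = - ∂ₓ J` -/
lemma continuity_eq
    (hVlasov : ∀ x v t : ℝ,
      deriv (fun s => f (x, v, s)) t + v * deriv (fun y => f (y, v, t)) x +
        E (x, t) * deriv (fun w => f (x, w, t)) v = 0)
    (x t : ℝ) :
    ∫ v : ℝ, fderiv ℝ f (x, v, t) (0, 0, 1)
      = -∫ v : ℝ, v * fderiv ℝ f (x, v, t) (1, 0, 0) := by
  obtain ⟨R, hR, hvan⟩ := VP.vanish_pt hsupp x t
  have h1 : Integrable fun v : ℝ => v * fderiv ℝ f (x, v, t) (1, 0, 0) :=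
    VP.integrable_of_vanish (continuous_id.mul (contv hf _ x t)) (R := R)
      (fun v hv => by rw [(hvan v hv).2]; simp)
  have h2 : Integrable fun v : ℝ => E (x, t) * fderiv ℝ f (x, v, t) (0, 1, 0) :=
    (VP.integrable_of_vanish (contv hf _ x t) (R := R)
      (fun v hv => by rw [(hvan v hv).2]; simp)).const_mul _
  have hcongr : (fun v : ℝ => fderiv ℝ f (x, v, t) (0, 0, 1))
      = fun v : ℝ => -(v * fderiv ℝ f (x, v, t) (1, 0, 0))
          - E (x, t) * fderiv ℝ f (x, v, t) (0, 1, 0) := by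
    funext v; exact vlasov_fd hf hVlasov x v t
  have hsub : ∫ v : ℝ, (-(v * fderiv ℝ f (x, v, t) (1, 0, 0))
        - E (x, t) * fderiv ℝ f (x, v, t) (0, 1, 0))
      = (∫ v : ℝ, -(v * fderiv ℝ f (x, v, t) (1, 0, 0)))
        - ∫ v : ℝ, E (x, t) * fderiv ℝ f (x, v, t) (0, 1, 0) := integral_sub h1.neg h2
  rw [hcongr, hsub, integral_neg, integral_const_mul,
    VP.integral_dv hf hsupp x t, mul_zero, sub_zero]

/-- momentum equation: `∂ₜ J = E ρ - ∂ₓ M₂` -/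
lemma momentum_eq
    (hVlasov : ∀ x v t : ℝ,
      deriv (fun s => f (x, v, s)) t + v * deriv (fun y => f (y, v, t)) x +
        E (x, t) * deriv (fun w => f (x, w, t)) v = 0)
    (x t : ℝ) :
    ∫ v : ℝ, v * fderiv ℝ f (x, v, t) (0, 0, 1)
      = E (x, t) * (∫ v : ℝ, f (x, v, t))
        - ∫ v : ℝ, v ^ 2 * fderiv ℝ f (x, v, t) (1, 0, 0) := by
  obtain ⟨R, hR, hvan⟩ := VP.vanish_pt hsupp x t
  have h1 : Integrable fun v : ℝ => v ^ 2 * fderiv ℝ f (x, v, t) (1, 0, 0) :=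
    VP.integrable_of_vanish ((continuous_pow 2).mul (contv hf _ x t)) (R := R)
      (fun v hv => by rw [(hvan v hv).2]; simp)
  have h2 : Integrable fun v : ℝ => E (x, t) * (v * fderiv ℝ f (x, v, t) (0, 1, 0)) :=
    (VP.integrable_of_vanish (continuous_id.mul (contv hf _ x t)) (R := R)
      (fun v hv => by simp [(hvan v hv).2])).const_mul _
  have hcongr : (fun v : ℝ => v * fderiv ℝ f (x, v, t) (0, 0, 1))
      = fun v : ℝ => -(v ^ 2 * fderiv ℝ f (x, v, t) (1, 0, 0))
          - E (x, t) * (v * fderiv ℝ f (x, v, t) (0, 1, 0)) := by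
    funext v
    rw [vlasov_fd hf hVlasov x v t]
    ring
  have hsub : ∫ v : ℝ, (-(v ^ 2 * fderiv ℝ f (x, v, t) (1, 0, 0))
        - E (x, t) * (v * fderiv ℝ f (x, v, t) (0, 1, 0)))
      = (∫ v : ℝ, -(v ^ 2 * fderiv ℝ f (x, v, t) (1, 0, 0)))
        - ∫ v : ℝ, E (x, t) * (v * fderiv ℝ f (x, v, t) (0, 1, 0)) := integral_sub h1.neg h2
  rw [hcongr, hsub, integral_neg, integral_const_mul,
    VP.integral_v_dv hf hsupp x t]
  ring

end
end VP

namespace VP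

variable {f : ℝ × ℝ × ℝ → ℝ} {E : ℝ × ℝ → ℝ}

section
variable (hf : ContDiff ℝ 2 f)
  (hsupp : ∀ K : Set (ℝ × ℝ), IsCompact K → ∃ R : ℝ, ∀ x t : ℝ, (x, t) ∈ K →
      ∀ v : ℝ, R ≤ |v| → f (x, v, t) = 0)
  (hE : ContDiff ℝ 3 E)
  (hPoisson : ∀ x t : ℝ,
      deriv (fun y => E (y, t)) x = (∫ v : ℝ, f (x, v, t)) - 1)
  (hVlasov : ∀ x v t : ℝ,
      deriv (fun s => f (x, v, s)) t + v * deriv (fun y => f (y, v, t)) x +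
        E (x, t) * deriv (fun w => f (x, w, t)) v = 0)

include hE

omit hf in
lemma poisson_fd (hP : ∀ x t : ℝ,
      deriv (fun y => E (y, t)) x = (∫ v : ℝ, f (x, v, t)) - 1) (x t : ℝ) :
    fderiv ℝ E (x, t) (1, 0) = (∫ v : ℝ, f (x, v, t)) - 1 := by
  rw [← (VP.hasDerivAt_x2 (hE.differentiable (by norm_num)) x t).deriv]
  exact hP x t

include hf hsupp hPoisson

lemma Exx_eq (x t : ℝ) :
    fderiv ℝ (fun q => fderiv ℝ E q (1, 0)) (x, t) (1, 0)
      = ∫ v : ℝ, fderiv ℝ f (x, v, t) (1, 0, 0) := by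
  have hEx : ContDiff ℝ 2 fun q => fderiv ℝ E q (1, 0) := VP.contDiff_fderiv_apply2 hE (1, 0)
  have hA := VP.hasDerivAt_x2 (hEx.differentiable (by norm_num)) x t
  have hfun : (fun y => fderiv ℝ E (y, t) (1, 0)) = fun y => (∫ v : ℝ, f (y, v, t)) - 1 := by
    funext y; exact poisson_fd hE hPoisson y t
  rw [hfun] at hA
  exact hA.unique ((VP.rho_x hf hsupp x t).sub_const 1)

lemma Ext_eq (x t : ℝ) :
    fderiv ℝ (fun q => fderiv ℝ E q (1, 0)) (x, t) (0, 1)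
      = ∫ v : ℝ, fderiv ℝ f (x, v, t) (0, 0, 1) := by
  have hEx : ContDiff ℝ 2 fun q => fderiv ℝ E q (1, 0) := VP.contDiff_fderiv_apply2 hE (1, 0)
  have hA := VP.hasDerivAt_t2 (hEx.differentiable (by norm_num)) x t
  have hfun : (fun s => fderiv ℝ E (x, s) (1, 0)) = fun s => (∫ v : ℝ, f (x, v, s)) - 1 := by
    funext s; exact poisson_fd hE hPoisson x s
  rw [hfun] at hA
  exact hA.unique ((VP.rho_t hf hsupp x t).sub_const 1)

include hVlasov

/-- `∂ₓ(∂ₜE) = ∂ₜρ = -∂ₓJ` -/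
lemma Etx_eq (x t : ℝ) :
    fderiv ℝ (fun q => fderiv ℝ E q (0, 1)) (x, t) (1, 0)
      = -∫ v : ℝ, v * fderiv ℝ f (x, v, t) (1, 0, 0) := by
  rw [VP.mixed_symm (hE.of_le (by norm_num)) (x, t) (0, 1) (1, 0),
    Ext_eq hf hsupp hE hPoisson x t, VP.continuity_eq hf hsupp hVlasov x t]

/-- `∂ₜE + J` is independent of `x` -/
lemma Et_add_J_const (x y t : ℝ) :
    fderiv ℝ E (x, t) (0, 1) + ∫ v : ℝ, v * f (x, v, t)
      = fderiv ℝ E (y, t) (0, 1) + ∫ v : ℝ, v * f (y, v, t) := by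
  have hEt : ContDiff ℝ 2 fun q => fderiv ℝ E q (0, 1) := VP.contDiff_fderiv_apply2 hE (0, 1)
  have hg : ∀ z : ℝ, HasDerivAt
      (fun y => fderiv ℝ E (y, t) (0, 1) + ∫ v : ℝ, v * f (y, v, t)) 0 z := by
    intro z
    have h1 := VP.hasDerivAt_x2 (hEt.differentiable (by norm_num)) z t
    have h2 := VP.J_x hf hsupp z t
    have := h1.add h2
    rw [Etx_eq hf hsupp hE hPoisson hVlasov z t, neg_add_cancel] at this
    exact this
  exact is_const_of_deriv_eq_zero (fun z => (hg z).differentiableAt)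
    (fun z => (hg z).deriv) x y

end
end VP

namespace VP

lemma contDiff_fderiv_apply2' {g : ℝ × ℝ → ℝ} (hg : ContDiff ℝ 2 g) (u : ℝ × ℝ) :
    ContDiff ℝ 1 fun p => fderiv ℝ g p u :=
  (ContinuousLinearMap.apply ℝ ℝ u).contDiff.comp (hg.fderiv_right (le_refl _))

variable {f : ℝ × ℝ × ℝ → ℝ} {E : ℝ × ℝ → ℝ}

section
variable (hf : ContDiff ℝ 2 f)
  (hsupp : ∀ K : Set (ℝ × ℝ), IsCompact K → ∃ R : ℝ, ∀ x t : ℝ, (x, t) ∈ K →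
      ∀ v : ℝ, R ≤ |v| → f (x, v, t) = 0)
  (hE : ContDiff ℝ 3 E)
  (hPoisson : ∀ x t : ℝ,
      deriv (fun y => E (y, t)) x = (∫ v : ℝ, f (x, v, t)) - 1)
  (hVlasov : ∀ x v t : ℝ,
      deriv (fun s => f (x, v, s)) t + v * deriv (fun y => f (y, v, t)) x +
        E (x, t) * deriv (fun w => f (x, w, t)) v = 0)
  {L : ℝ} (hL : 0 < L)
  (hfper : ∀ x v t : ℝ, f (x + L, v, t) = f (x, v, t))
  (hEper : ∀ x t : ℝ, E (x + L, t) = E (x, t))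
  (hEmean : ∀ t : ℝ, (∫ x in (0:ℝ)..L, E (x, t)) = 0)

include hf hsupp hE hPoisson hVlasov hL hfper hEper hEmean

lemma Ett_eq (x t : ℝ) :
    fderiv ℝ (fun q => fderiv ℝ E q (0, 1)) (x, t) (0, 1)
      = (∫ v : ℝ, v ^ 2 * fderiv ℝ f (x, v, t) (1, 0, 0))
        - E (x, t) * ∫ v : ℝ, f (x, v, t) := by
  have hEt : ContDiff ℝ 2 fun q => fderiv ℝ E q (0, 1) := VP.contDiff_fderiv_apply2 hE (0, 1)
  -- `∂ₜE = -J + φ(t)`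
  have hid : ∀ z s : ℝ, fderiv ℝ E (z, s) (0, 1)
      = -(∫ v : ℝ, v * f (z, v, s))
        + (fderiv ℝ E (0, s) (0, 1) + ∫ v : ℝ, v * f (0, v, s)) := by
    intro z s
    have := VP.Et_add_J_const hf hsupp hE hPoisson hVlasov z 0 s
    linarith
  -- `∂ₜₜE(z,t) = -∂ₜJ(z,t) + φ'(t)`
  have hEtt : ∀ z : ℝ, fderiv ℝ (fun q => fderiv ℝ E q (0, 1)) (z, t) (0, 1)
      = -(∫ v : ℝ, v * fderiv ℝ f (z, v, t) (0, 0, 1))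
        + (fderiv ℝ (fun q => fderiv ℝ E q (0, 1)) (0, t) (0, 1)
            + ∫ v : ℝ, v * fderiv ℝ f (0, v, t) (0, 0, 1)) := by
    intro z
    have hL1 := VP.hasDerivAt_t2 (hEt.differentiable (by norm_num)) z t
    have hR1 := ((VP.J_t hf hsupp z t).neg).add
      ((VP.hasDerivAt_t2 (hEt.differentiable (by norm_num)) 0 t).add (VP.J_t hf hsupp 0 t))
    have hfun : (fun s => fderiv ℝ E (z, s) (0, 1))
        = fun s => -(∫ v : ℝ, v * f (z, v, s))
            + (fderiv ℝ E (0, s) (0, 1) + ∫ v : ℝ, v * f (0, v, s)) :=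
      funext fun s => hid z s
    rw [show (fun s => (fun q => fderiv ℝ E q (0, 1)) (z, s))
        = fun s => fderiv ℝ E (z, s) (0, 1) from rfl, hfun] at hL1
    exact hL1.unique hR1
  -- substitute the momentum equation
  have hmain : ∀ z : ℝ, fderiv ℝ (fun q => fderiv ℝ E q (0, 1)) (z, t) (0, 1)
      = (∫ v : ℝ, v ^ 2 * fderiv ℝ f (z, v, t) (1, 0, 0))
        - E (z, t) * (∫ v : ℝ, f (z, v, t))
        + (fderiv ℝ (fun q => fderiv ℝ E q (0, 1)) (0, t) (0, 1)
            + ∫ v : ℝ, v * fderiv ℝ f (0, v, t) (0, 0, 1)) := by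
    intro z
    rw [hEtt z, VP.momentum_eq hf hsupp hVlasov z t]
    ring
  set C : ℝ := fderiv ℝ (fun q => fderiv ℝ E q (0, 1)) (0, t) (0, 1)
      + ∫ v : ℝ, v * fderiv ℝ f (0, v, t) (0, 0, 1) with hCdef
  -- `∫₀ᴸ ∂ₜE dx = 0`
  have hInt1 : ∀ s : ℝ, (∫ x in (0:ℝ)..L, fderiv ℝ E (x, s) (0, 1)) = 0 := by
    intro s
    have h := VP.ikey (hE.of_le (by norm_num)) L s
    have hfun : (fun s => ∫ x in (0:ℝ)..L, E (x, s)) = fun _ => (0 : ℝ) := funext hEmean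
    rw [hfun] at h
    exact (h.unique (hasDerivAt_const s 0)).symm ▸ rfl
  -- `∫₀ᴸ ∂ₜₜE dx = 0`
  have hInt2 : (∫ x in (0:ℝ)..L, fderiv ℝ (fun q => fderiv ℝ E q (0, 1)) (x, t) (0, 1)) = 0 := by
    have h := VP.ikey (G := fun q => fderiv ℝ E q (0, 1)) (hEt.of_le one_le_two) L t
    have hfun : (fun s => ∫ x in (0:ℝ)..L, fderiv ℝ E (x, s) (0, 1)) = fun _ => (0 : ℝ) :=
      funext hInt1
    rw [hfun] at h
    exact h.unique (hasDerivAt_const t 0)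
  -- continuity facts in `x`
  have hExc : Continuous fun z : ℝ => fderiv ℝ E (z, t) (1, 0) :=
    ((VP.contDiff_fderiv_apply2 hE (1, 0)).continuous).comp
      (continuous_id.prodMk continuous_const)
  have hrho_eq : (fun z : ℝ => ∫ v : ℝ, f (z, v, t))
      = fun z => fderiv ℝ E (z, t) (1, 0) + 1 := by
    funext z
    have := VP.poisson_fd hE hPoisson z t
    linarith
  have hrc : Continuous fun z : ℝ => ∫ v : ℝ, f (z, v, t) := by
    rw [hrho_eq]; exact hExc.add continuous_const
  have hEc : Continuous fun z : ℝ => E (z, t) :=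
    hE.continuous.comp (continuous_id.prodMk continuous_const)
  have hEttc : Continuous fun z : ℝ => fderiv ℝ (fun q => fderiv ℝ E q (0, 1)) (z, t) (0, 1) :=
    ((VP.contDiff_fderiv_apply2' hEt (0, 1)).continuous).comp
      (continuous_id.prodMk continuous_const)
  have hDM_eq : (fun z : ℝ => ∫ v : ℝ, v ^ 2 * fderiv ℝ f (z, v, t) (1, 0, 0))
      = fun z => fderiv ℝ (fun q => fderiv ℝ E q (0, 1)) (z, t) (0, 1)
          + E (z, t) * (∫ v : ℝ, f (z, v, t)) - C := by
    funext z
    have := hmain z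
    linarith
  have hDMc : Continuous fun z : ℝ => ∫ v : ℝ, v ^ 2 * fderiv ℝ f (z, v, t) (1, 0, 0) := by
    rw [hDM_eq]
    exact (hEttc.add (hEc.mul hrc)).sub continuous_const
  -- `∫₀ᴸ ∂ₓM₂ dx = 0` by periodicity
  have hFTC_M : (∫ x in (0:ℝ)..L, ∫ v : ℝ, v ^ 2 * fderiv ℝ f (x, v, t) (1, 0, 0))
      = (∫ v : ℝ, v ^ 2 * f (L, v, t)) - ∫ v : ℝ, v ^ 2 * f (0, v, t) :=
    intervalIntegral.integral_eq_sub_of_hasDerivAt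
      (fun z _ => VP.M2_x hf hsupp z t) (hDMc.intervalIntegrable _ _)
  have hM2per : (∫ v : ℝ, v ^ 2 * f (L, v, t)) = ∫ v : ℝ, v ^ 2 * f (0, v, t) := by
    have hper : (fun v : ℝ => v ^ 2 * f (L, v, t)) = fun v : ℝ => v ^ 2 * f (0, v, t) := by
      funext v
      have := hfper 0 v t
      rw [zero_add] at this
      rw [this]
    rw [hper]
  have hIntM : (∫ x in (0:ℝ)..L, ∫ v : ℝ, v ^ 2 * fderiv ℝ f (x, v, t) (1, 0, 0)) = 0 := by
    rw [hFTC_M, hM2per, sub_self]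
  -- `∫₀ᴸ E ρ dx = 0`
  have hEx2 : ∀ z : ℝ, HasDerivAt (fun y => E (y, t)) (fderiv ℝ E (z, t) (1, 0)) z :=
    fun z => VP.hasDerivAt_x2 (hE.differentiable (by norm_num)) z t
  have hsq : ∀ z : ℝ, HasDerivAt (fun y => E (y, t) * E (y, t) / 2)
      (E (z, t) * fderiv ℝ E (z, t) (1, 0)) z := by
    intro z
    have h := ((hEx2 z).mul (hEx2 z)).div_const 2
    simp only [Pi.mul_def] at h
    exact h.congr_deriv (by ring)
  have hEExc : Continuous fun z : ℝ => E (z, t) * fderiv ℝ E (z, t) (1, 0) := hEc.mul hExc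
  have hFTC_E : (∫ x in (0:ℝ)..L, E (x, t) * fderiv ℝ E (x, t) (1, 0))
      = E (L, t) * E (L, t) / 2 - E (0, t) * E (0, t) / 2 :=
    intervalIntegral.integral_eq_sub_of_hasDerivAt (fun z _ => hsq z)
      (hEExc.intervalIntegrable _ _)
  have hEperL : E (L, t) = E (0, t) := by
    have := hEper 0 t
    rwa [zero_add] at this
  have hErho_eq : (fun x : ℝ => E (x, t) * ∫ v : ℝ, f (x, v, t))
      = fun x : ℝ => E (x, t) * fderiv ℝ E (x, t) (1, 0) + E (x, t) := by
    funext z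
    have := VP.poisson_fd hE hPoisson z t
    rw [show (∫ v : ℝ, f (z, v, t)) = fderiv ℝ E (z, t) (1, 0) + 1 by linarith]
    ring
  have hIntErho : (∫ x in (0:ℝ)..L, E (x, t) * ∫ v : ℝ, f (x, v, t)) = 0 := by
    rw [hErho_eq, intervalIntegral.integral_add (hEExc.intervalIntegrable _ _)
      (hEc.intervalIntegrable _ _), hFTC_E, hEmean t, hEperL]
    ring
  -- integrate the main identity to get `C = 0`
  have hCzero : C = 0 := by
    have hfunm : (fun x : ℝ => fderiv ℝ (fun q => fderiv ℝ E q (0, 1)) (x, t) (0, 1))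
        = fun x : ℝ => (∫ v : ℝ, v ^ 2 * fderiv ℝ f (x, v, t) (1, 0, 0))
            - E (x, t) * (∫ v : ℝ, f (x, v, t)) + C := by
      funext z
      exact hmain z
    have hsplit : (∫ x in (0:ℝ)..L, ((∫ v : ℝ, v ^ 2 * fderiv ℝ f (x, v, t) (1, 0, 0))
            - E (x, t) * (∫ v : ℝ, f (x, v, t)) + C))
        = (∫ x in (0:ℝ)..L, ∫ v : ℝ, v ^ 2 * fderiv ℝ f (x, v, t) (1, 0, 0))
          - (∫ x in (0:ℝ)..L, E (x, t) * ∫ v : ℝ, f (x, v, t))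
          + ∫ x in (0:ℝ)..L, (C : ℝ) := by
      rw [intervalIntegral.integral_add (((hDMc.intervalIntegrable _ _).sub
        ((show Continuous fun x => E (x, t) * ∫ v : ℝ, f (x, v, t) from hEc.mul hrc).intervalIntegrable _ _))) (intervalIntegrable_const),
        intervalIntegral.integral_sub (hDMc.intervalIntegrable _ _)
        ((show Continuous fun x => E (x, t) * ∫ v : ℝ, f (x, v, t) from hEc.mul hrc).intervalIntegrable _ _)]
    have h0 := hInt2
    rw [hfunm, hsplit, hIntM, hIntErho, intervalIntegral.integral_const] at h0
    simp only [sub_zero, zero_sub, neg_zero, zero_add, smul_eq_mul, sub_zero] at h0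
    have : L * C = 0 := by linarith [h0]
    rcases mul_eq_zero.1 this with h | h
    · exact absurd h (ne_of_gt hL)
    · exact h
  rw [hmain x, hCzero, add_zero]

end
end VP

end VlasovPoissonAux

/-- For the periodic 1D-1D Vlasov–Poisson system, along a characteristic
`X' = V`, `V' = E(X, t)` the second material derivative of the field satisfies
`(d²/dt²) E(X(t), t) = V(t)² ∂ₓρ + ∂ₓM₂ − 2 V(t) ∂ₓJ − E(X(t), t)`,
where `ρ = ∫ f dv`, `J = ∫ v f dv`, `M₂ = ∫ v² f dv`. -/
theorem vlasov_poisson_second_material_derivative_of_field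
    (L : ℝ) (hL : 0 < L)
    (f : ℝ × ℝ × ℝ → ℝ) (hf : ContDiff ℝ 2 f)
    (hfper : ∀ x v t : ℝ, f (x + L, v, t) = f (x, v, t))
    (hsupp : ∀ K : Set (ℝ × ℝ), IsCompact K → ∃ R : ℝ, ∀ x t : ℝ, (x, t) ∈ K →
      ∀ v : ℝ, R ≤ |v| → f (x, v, t) = 0)
    (E : ℝ × ℝ → ℝ) (hE : ContDiff ℝ 3 E)
    (hEper : ∀ x t : ℝ, E (x + L, t) = E (x, t))
    (hPoisson : ∀ x t : ℝ,
      deriv (fun y => E (y, t)) x = (∫ v : ℝ, f (x, v, t)) - 1)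
    (hEmean : ∀ t : ℝ, (∫ x in (0:ℝ)..L, E (x, t)) = 0)
    (hVlasov : ∀ x v t : ℝ,
      deriv (fun s => f (x, v, s)) t + v * deriv (fun y => f (y, v, t)) x +
        E (x, t) * deriv (fun w => f (x, w, t)) v = 0)
    (I : Set ℝ) (hIopen : IsOpen I) (hIconn : I.OrdConnected)
    (X V : ℝ → ℝ)
    (hX : ∀ t ∈ I, HasDerivAt X (V t) t)
    (hV : ∀ t ∈ I, HasDerivAt V (E (X t, t)) t) :
    ∀ t ∈ I,
      deriv (fun s => deriv (fun r => E (X r, r)) s) t =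
        (V t) ^ 2 * deriv (fun y => ∫ v : ℝ, f (y, v, t)) (X t) +
          deriv (fun y => ∫ v : ℝ, v ^ 2 * f (y, v, t)) (X t) -
          2 * V t * deriv (fun y => ∫ v : ℝ, v * f (y, v, t)) (X t) -
          E (X t, t) := by
  intro t ht
  have hEd : Differentiable ℝ E := hE.differentiable (by norm_num)
  have hEx : ContDiff ℝ 2 fun q => fderiv ℝ E q (1, 0) := VP.contDiff_fderiv_apply2 hE (1, 0)
  have hEt : ContDiff ℝ 2 fun q => fderiv ℝ E q (0, 1) := VP.contDiff_fderiv_apply2 hE (0, 1)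
  -- first derivative along the characteristic, valid on all of `I`
  have hg' : ∀ s ∈ I, HasDerivAt (fun r => E (X r, r))
      (V s * fderiv ℝ E (X s, s) (1, 0) + fderiv ℝ E (X s, s) (0, 1)) s := by
    intro s hs
    have hpath : HasDerivAt (fun r => ((X r, r) : ℝ × ℝ)) (V s, 1) s :=
      (hX s hs).prodMk (hasDerivAt_id s)
    have h := (hEd (X s, s)).hasFDerivAt.comp_hasDerivAt (f := fun r => ((X r, r) : ℝ × ℝ)) s hpath
    rw [VP.fd2_expand (X s, s) (V s) 1, one_mul] at h
    exact h
  have hev : (fun s => deriv (fun r => E (X r, r)) s) =ᶠ[nhds t]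
      fun s => V s * fderiv ℝ E (X s, s) (1, 0) + fderiv ℝ E (X s, s) (0, 1) := by
    filter_upwards [hIopen.mem_nhds ht] with s hs
    exact (hg' s hs).deriv
  rw [hev.deriv_eq]
  -- second derivative via the chain rule
  have hpath : HasDerivAt (fun r => ((X r, r) : ℝ × ℝ)) (V t, 1) t :=
    (hX t ht).prodMk (hasDerivAt_id t)
  have hA : HasDerivAt (fun s => fderiv ℝ E (X s, s) (1, 0))
      (fderiv ℝ (fun q => fderiv ℝ E q (1, 0)) (X t, t) (V t, 1)) t :=
    ((hEx.differentiable (by norm_num)) (X t, t)).hasFDerivAt.comp_hasDerivAt (f := fun r => ((X r, r) : ℝ × ℝ)) t hpath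
  have hB : HasDerivAt (fun s => fderiv ℝ E (X s, s) (0, 1))
      (fderiv ℝ (fun q => fderiv ℝ E q (0, 1)) (X t, t) (V t, 1)) t :=
    ((hEt.differentiable (by norm_num)) (X t, t)).hasFDerivAt.comp_hasDerivAt (f := fun r => ((X r, r) : ℝ × ℝ)) t hpath
  have hG : HasDerivAt (fun s => V s * fderiv ℝ E (X s, s) (1, 0) + fderiv ℝ E (X s, s) (0, 1)) _ t :=
    ((hV t ht).mul hA).add hB
  rw [hG.deriv]
  rw [VP.fd2_expand (g := fun q => fderiv ℝ E q (1, 0)) (X t, t) (V t) 1,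
    VP.fd2_expand (g := fun q => fderiv ℝ E q (0, 1)) (X t, t) (V t) 1]
  rw [VP.poisson_fd hE hPoisson (X t) t,
    VP.Exx_eq hf hsupp hE hPoisson (X t) t,
    VP.Ext_eq hf hsupp hE hPoisson (X t) t,
    VP.continuity_eq hf hsupp hVlasov (X t) t,
    VP.Etx_eq hf hsupp hE hPoisson hVlasov (X t) t,
    VP.Ett_eq hf hsupp hE hPoisson hVlasov hL hfper hEper hEmean (X t) t,
    (VP.rho_x hf hsupp (X t) t).deriv, (VP.J_x hf hsupp (X t) t).deriv,
    (VP.M2_x hf hsupp (X t) t).deriv]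
  ring
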